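/- If for almost every p ∈ ℝⁿ (with the parabolic metric d) the quantity β_∞(2Q) → 0 as dyadic parabolic boxes Q containing p shrink to p, and if for almost every p = (x,t) there is a linear map A_p : ℝ^{n−1} → ℝ with |ψ(y,t) − ψ(p) − A_p(y − x)| = o(|y − x|), then for almost every p: |ψ(q) − ψ(p) − A_p(y − x)| = o(d(p,q)) as q = (y,s) → p, i.e., ψ is parabolically differentiable at p with horizontal derivative A_p. -/

import Mathlib

open MeasureTheory
open scoped NNReal

/-- The parabolic distance on `ℝ^{n-1} × ℝ`. -/
noncomputable def pdist {d : ℕ} (p q : EuclideanSpace ℝ (Fin d) × ℝ) : ℝ :=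
  dist p.1 q.1 + Real.sqrt |p.2 - q.2|

/-- Diameter of a set in the parabolic metric. -/
noncomputable def pdiam {d : ℕ} (S : Set (EuclideanSpace ℝ (Fin d) × ℝ)) : ℝ :=
  sSup ((fun pq : (EuclideanSpace ℝ (Fin d) × ℝ) × (EuclideanSpace ℝ (Fin d) × ℝ) =>
    pdist pq.1 pq.2) '' (S ×ˢ S))

/-- The dyadic parabolic box of generation `j`. -/
def pdyBox (d : ℕ) (j : ℤ) (k : Fin d → ℤ) (m : ℤ) :
    Set (EuclideanSpace ℝ (Fin d) × ℝ) :=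
  {p | (∀ i, (k i : ℝ) * (2 : ℝ) ^ (-j) ≤ p.1 i ∧ p.1 i < ((k i : ℝ) + 1) * (2 : ℝ) ^ (-j)) ∧
    ((m : ℝ) * (2 : ℝ) ^ (-(2 * j)) ≤ p.2 ∧ p.2 < ((m : ℝ) + 1) * (2 : ℝ) ^ (-(2 * j)))}

/-- The concentric dilate `cQ` of the dyadic parabolic box. -/
def pdyDil (d : ℕ) (c : ℝ) (j : ℤ) (k : Fin d → ℤ) (m : ℤ) :
    Set (EuclideanSpace ℝ (Fin d) × ℝ) :=
  {p | (∀ i, |p.1 i - ((k i : ℝ) + 1 / 2) * (2 : ℝ) ^ (-j)| ≤ c * (2 : ℝ) ^ (-j) / 2) ∧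
    |p.2 - ((m : ℝ) + 1 / 2) * (2 : ℝ) ^ (-(2 * j))| ≤ c * (2 : ℝ) ^ (-(2 * j)) / 2}

/-- The parabolic `L^∞` beta number: infimum over affine maps `A : ℝ^{n-1} → ℝ` of
`sup_{(y,s) ∈ Q} |ψ(y,s) − A(y)| / diam Q` (diameter in the parabolic metric). -/
noncomputable def betaInfP (d : ℕ) (ψ : EuclideanSpace ℝ (Fin d) × ℝ → ℝ)
    (Q : Set (EuclideanSpace ℝ (Fin d) × ℝ)) : ℝ :=
  sInf {r : ℝ | ∃ A : EuclideanSpace ℝ (Fin d) →ᵃ[ℝ] ℝ,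
    r = ⨆ p ∈ Q, |ψ p - A p.1| / pdiam Q}

section helpers
variable {d : ℕ}

lemma pdist_nonneg (p q : EuclideanSpace ℝ (Fin d) × ℝ) : 0 ≤ pdist p q :=
  add_nonneg dist_nonneg (Real.sqrt_nonneg _)

lemma pdiam_nonneg (S : Set (EuclideanSpace ℝ (Fin d) × ℝ)) : 0 ≤ pdiam S := by
  apply Real.sSup_nonneg
  rintro x ⟨⟨a, b⟩, -, rfl⟩
  exact pdist_nonneg a b

lemma pdiam_le {S : Set (EuclideanSpace ℝ (Fin d) × ℝ)} {M : ℝ}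
    (h : ∀ a ∈ S, ∀ b ∈ S, pdist a b ≤ M) (hM : 0 ≤ M) : pdiam S ≤ M := by
  apply Real.sSup_le _ hM
  rintro x ⟨⟨a, b⟩, hab, rfl⟩
  exact h a hab.1 b hab.2

lemma le_pdiam {S : Set (EuclideanSpace ℝ (Fin d) × ℝ)} {M : ℝ}
    (h : ∀ a ∈ S, ∀ b ∈ S, pdist a b ≤ M) {a b} (ha : a ∈ S) (hb : b ∈ S) :
    pdist a b ≤ pdiam S := by
  apply le_csSup
  · exact ⟨M, by rintro x ⟨⟨u, v⟩, huv, rfl⟩; exact h u huv.1 v huv.2⟩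
  · exact ⟨(a, b), ⟨ha, hb⟩, rfl⟩

lemma abs_coord_le (w : EuclideanSpace ℝ (Fin d)) (i : Fin d) : |w i| ≤ ‖w‖ := by
  rw [EuclideanSpace.norm_eq]
  have h1 : |w i| = Real.sqrt (‖w i‖ ^ 2) := by
    rw [Real.sqrt_sq (norm_nonneg _), Real.norm_eq_abs]
  rw [h1]
  exact Real.sqrt_le_sqrt (Finset.single_le_sum (f := fun j => ‖w j‖ ^ 2)
    (fun j _ => sq_nonneg _) (Finset.mem_univ i))

lemma norm_le_of_coords {a : ℝ} (ha : 0 ≤ a) (w : EuclideanSpace ℝ (Fin d))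
    (h : ∀ i, |w i| ≤ a) : ‖w‖ ≤ Real.sqrt d * a := by
  rw [EuclideanSpace.norm_eq]
  have h1 : ∑ i : Fin d, ‖w i‖ ^ 2 ≤ ∑ _i : Fin d, a ^ 2 := by
    apply Finset.sum_le_sum
    intro i _
    rw [Real.norm_eq_abs]
    exact pow_le_pow_left₀ (abs_nonneg _) (h i) 2
  calc Real.sqrt (∑ i : Fin d, ‖w i‖ ^ 2) ≤ Real.sqrt (∑ _i : Fin d, a ^ 2) :=
        Real.sqrt_le_sqrt h1
    _ = Real.sqrt ((d : ℝ) * a ^ 2) := by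
        rw [Finset.sum_const, Finset.card_univ, Fintype.card_fin, nsmul_eq_mul]
    _ = Real.sqrt d * a := by
        rw [Real.sqrt_mul (Nat.cast_nonneg d), Real.sqrt_sq ha]

lemma beta_extract (L : ℝ≥0) (ψ : EuclideanSpace ℝ (Fin d) × ℝ → ℝ)
    (hψ : ∀ p q, |ψ p - ψ q| ≤ (L : ℝ) * pdist p q)
    (Q : Set (EuclideanSpace ℝ (Fin d) × ℝ)) (M : ℝ)
    (hM : ∀ a ∈ Q, ∀ b ∈ Q, pdist a b ≤ M)
    (q0 : EuclideanSpace ℝ (Fin d) × ℝ) (hq0 : q0 ∈ Q)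
    (hpd : 0 < pdiam Q) {ε : ℝ} (hβ : betaInfP d ψ Q < ε) :
    ∃ A : EuclideanSpace ℝ (Fin d) →ᵃ[ℝ] ℝ, ∀ q ∈ Q, |ψ q - A q.1| ≤ ε * pdiam Q := by
  have hM0 : 0 ≤ M := (pdist_nonneg q0 q0).trans (hM q0 hq0 q0 hq0)
  set S : Set ℝ := {r : ℝ | ∃ A : EuclideanSpace ℝ (Fin d) →ᵃ[ℝ] ℝ,
    r = ⨆ p ∈ Q, |ψ p - A p.1| / pdiam Q} with hS
  have hSne : S.Nonempty := ⟨_, AffineMap.const ℝ _ (0 : ℝ), rfl⟩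
  have hSbd : BddBelow S := by
    refine ⟨0, ?_⟩
    rintro r ⟨A, rfl⟩
    exact Real.iSup_nonneg fun p => Real.iSup_nonneg fun _ =>
      div_nonneg (abs_nonneg _) (pdiam_nonneg Q)
  have hβ' : sInf S < ε := hβ
  obtain ⟨rr, ⟨A, rfl⟩, hrlt⟩ := (csInf_lt_iff hSbd hSne).mp hβ'
  refine ⟨A, fun q hq => ?_⟩
  set A' := LinearMap.toContinuousLinearMap A.linear with hA'
  have hAsub : ∀ u v : EuclideanSpace ℝ (Fin d), |A u - A v| ≤ ‖A'‖ * ‖u - v‖ := by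
    intro u v
    have h1 : A.linear (u - v) = A u - A v := by
      have := AffineMap.linearMap_vsub A u v
      simpa [vsub_eq_sub] using this
    have h2 : |A u - A v| = ‖A' (u - v)‖ := by
      rw [← h1]
      simp [hA', Real.norm_eq_abs]
    rw [h2]
    exact A'.le_opNorm _
  have hbound : ∀ p ∈ Q, |ψ p - A p.1| ≤ |ψ q0 - A q0.1| + ((L : ℝ) + ‖A'‖) * M := by
    intro p hp
    have e1 : ψ p - A p.1 = (ψ p - ψ q0) + (ψ q0 - A q0.1) + (A q0.1 - A p.1) := by ring
    have t1 : |ψ p - ψ q0| ≤ (L : ℝ) * M :=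
      (hψ p q0).trans (mul_le_mul_of_nonneg_left (hM p hp q0 hq0) L.coe_nonneg)
    have t2 : |A q0.1 - A p.1| ≤ ‖A'‖ * M := by
      refine (hAsub q0.1 p.1).trans (mul_le_mul_of_nonneg_left ?_ (norm_nonneg _))
      have : ‖q0.1 - p.1‖ = dist q0.1 p.1 := (dist_eq_norm _ _).symm
      rw [this]
      exact le_trans (le_add_of_nonneg_right (Real.sqrt_nonneg _)) (hM q0 hq0 p hp)
    calc |ψ p - A p.1| ≤ |ψ p - ψ q0| + |ψ q0 - A q0.1| + |A q0.1 - A p.1| := by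
          rw [e1]; exact (abs_add_le _ _).trans (add_le_add_left (abs_add_le _ _) _)
      _ ≤ (L : ℝ) * M + |ψ q0 - A q0.1| + ‖A'‖ * M := by
          exact add_le_add (add_le_add_left t1 _) t2
      _ = |ψ q0 - A q0.1| + ((L : ℝ) + ‖A'‖) * M := by ring
  set B : ℝ := (|ψ q0 - A q0.1| + ((L : ℝ) + ‖A'‖) * M) / pdiam Q with hB
  have hB0 : 0 ≤ B := by
    apply div_nonneg _ hpd.le
    positivity
  have hBdd : BddAbove (Set.range fun p => ⨆ _ : p ∈ Q, |ψ p - A p.1| / pdiam Q) := by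
    refine ⟨B, ?_⟩
    rintro x ⟨p, rfl⟩
    refine Real.iSup_le (fun hp => ?_) hB0
    rw [hB]
    exact div_le_div_of_nonneg_right (hbound p hp) hpd.le
  have hle : |ψ q - A q.1| / pdiam Q ≤ ⨆ p ∈ Q, |ψ p - A p.1| / pdiam Q := by
    have h1 : |ψ q - A q.1| / pdiam Q = ⨆ _ : q ∈ Q, |ψ q - A q.1| / pdiam Q :=
      (ciSup_pos (p := q ∈ Q) (f := fun _ => |ψ q - A q.1| / pdiam Q) hq).symm
    rw [h1]
    exact le_ciSup hBdd q
  have : |ψ q - A q.1| / pdiam Q < ε := lt_of_le_of_lt hle hrlt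
  have := (div_lt_iff₀ hpd).mp this
  linarith

end helpers

set_option maxHeartbeats 2000000 in
/-- Parabolic Rademacher upgrade: if a.e. `β_∞(2Q) → 0` along shrinking dyadic parabolic
boxes containing `p`, and a.e. `ψ` is horizontally differentiable, then a.e. the
horizontal derivative gives full parabolic differentiability. -/
theorem stmt17 (d : ℕ) (L : ℝ≥0) (ψ : EuclideanSpace ℝ (Fin d) × ℝ → ℝ)
    (hψ : ∀ p q, |ψ p - ψ q| ≤ (L : ℝ) * pdist p q)
    (h1 : ∀ᵐ p : EuclideanSpace ℝ (Fin d) × ℝ ∂volume,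
      ∀ ε > (0 : ℝ), ∃ δ > (0 : ℝ), ∀ (j : ℤ) (k : Fin d → ℤ) (m : ℤ),
        p ∈ pdyBox d j k m → pdiam (pdyBox d j k m) < δ →
          betaInfP d ψ (pdyDil d 2 j k m) < ε)
    (h2 : ∀ᵐ p : EuclideanSpace ℝ (Fin d) × ℝ ∂volume,
      ∃ A : EuclideanSpace ℝ (Fin d) →ₗ[ℝ] ℝ,
        ∀ ε > (0 : ℝ), ∃ δ > (0 : ℝ), ∀ y : EuclideanSpace ℝ (Fin d),
          ‖y - p.1‖ < δ → |ψ (y, p.2) - ψ p - A (y - p.1)| ≤ ε * ‖y - p.1‖) :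
    ∀ᵐ p : EuclideanSpace ℝ (Fin d) × ℝ ∂volume,
      ∃ A : EuclideanSpace ℝ (Fin d) →ₗ[ℝ] ℝ,
        (∀ ε > (0 : ℝ), ∃ δ > (0 : ℝ), ∀ y : EuclideanSpace ℝ (Fin d),
          ‖y - p.1‖ < δ → |ψ (y, p.2) - ψ p - A (y - p.1)| ≤ ε * ‖y - p.1‖) ∧
        (∀ ε > (0 : ℝ), ∃ δ > (0 : ℝ), ∀ q : EuclideanSpace ℝ (Fin d) × ℝ,
          pdist p q < δ → |ψ q - ψ p - A (q.1 - p.1)| ≤ ε * pdist p q) := by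
  filter_upwards [h1, h2] with p hp1 hp2
  obtain ⟨A, hA⟩ := hp2
  refine ⟨A, hA, ?_⟩
  intro ε hε
  set Cd := Real.sqrt d with hCdDef
  have hCd0 : 0 ≤ Cd := Real.sqrt_nonneg _
  set C : ℝ := 2 * Cd + 2 with hCDef
  have hC0 : 0 < C := by positivity
  have hε' : 0 < ε / (16 * C) := by positivity
  obtain ⟨δ₁, hδ₁, hbox⟩ := hp1 _ hε'
  obtain ⟨δ₂, hδ₂, hder⟩ := hA (ε / 2) (by positivity)
  refine ⟨min (δ₁ / (4 * (Cd + 1))) δ₂, by positivity, ?_⟩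
  intro q hq
  set D : ℝ := pdist p q with hDdef
  have hD0 : 0 ≤ D := pdist_nonneg p q
  have hq1 : dist p.1 q.1 ≤ D := le_add_of_nonneg_right (Real.sqrt_nonneg _)
  have hq2 : Real.sqrt |p.2 - q.2| ≤ D := le_add_of_nonneg_left dist_nonneg
  rcases hD0.lt_or_eq with hDpos | hD0'
  · -- main case : D > 0
    set l : ℤ := Int.log 2 (2 * D) with hlDef
    set j : ℤ := -(l + 1) with hjDef
    set r : ℝ := (2 : ℝ) ^ (l + 1) with hrDef
    have hrj : (2 : ℝ) ^ (-j) = r := by rw [hjDef, neg_neg]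
    have hrpos : 0 < r := by positivity
    have hrr : (2 : ℝ) ^ (-(2 * j)) = r ^ 2 := by
      have : -(2 * j) = (l + 1) + (l + 1) := by rw [hjDef]; ring
      rw [this, zpow_add₀ (by norm_num : (2:ℝ) ≠ 0), hrDef, sq]
    have h2D : 2 * D < r := by
      have h := Int.lt_zpow_succ_log_self (b := 2) (by norm_num) (2 * D)
      rw [show ((2:ℕ):ℝ) = 2 by norm_num] at h
      exact h
    have hr4D : r ≤ 4 * D := by
      have h := Int.zpow_log_le_self (b := 2) (by norm_num) (by linarith : (0:ℝ) < 2 * D)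
      rw [show ((2:ℕ):ℝ) = 2 by norm_num] at h
      have : r = 2 * (2 : ℝ) ^ l := by
        rw [hrDef, zpow_add₀ (by norm_num : (2:ℝ) ≠ 0)]; ring
      rw [this]; linarith
    set k : Fin d → ℤ := fun i => ⌊p.1 i / r⌋ with hkDef
    set m : ℤ := ⌊p.2 / r ^ 2⌋ with hmDef
    have hr2pos : 0 < r ^ 2 := by positivity
    have hkx : ∀ i, ((k i : ℝ)) * r ≤ p.1 i ∧ p.1 i < ((k i : ℝ) + 1) * r := by
      intro i
      constructor
      · exact (le_div_iff₀ hrpos).mp (Int.floor_le (p.1 i / r))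
      · exact_mod_cast (div_lt_iff₀ hrpos).mp (Int.lt_floor_add_one (p.1 i / r))
    have hmt : ((m : ℝ)) * r ^ 2 ≤ p.2 ∧ p.2 < ((m : ℝ) + 1) * r ^ 2 := by
      constructor
      · exact (le_div_iff₀ hr2pos).mp (Int.floor_le (p.2 / r ^ 2))
      · exact_mod_cast (div_lt_iff₀ hr2pos).mp (Int.lt_floor_add_one (p.2 / r ^ 2))
    have hpbox : p ∈ pdyBox d j k m := by
      simp only [pdyBox, Set.mem_setOf_eq, hrj, hrr]
      exact ⟨hkx, hmt⟩
    have hcx : ∀ i, |p.1 i - ((k i : ℝ) + 1 / 2) * r| ≤ r / 2 := by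
      intro i
      obtain ⟨h1, h2⟩ := hkx i
      have e : ((k i : ℝ) + 1) * r = (k i : ℝ) * r + r := by ring
      have e2 : ((k i : ℝ) + 1 / 2) * r = (k i : ℝ) * r + r / 2 := by ring
      rw [e] at h2
      rw [e2, abs_le]
      constructor <;> linarith
    have hct : |p.2 - ((m : ℝ) + 1 / 2) * r ^ 2| ≤ r ^ 2 / 2 := by
      obtain ⟨h1, h2⟩ := hmt
      have e : ((m : ℝ) + 1) * r ^ 2 = (m : ℝ) * r ^ 2 + r ^ 2 := by ring
      have e2 : ((m : ℝ) + 1 / 2) * r ^ 2 = (m : ℝ) * r ^ 2 + r ^ 2 / 2 := by ring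
      rw [e] at h2
      rw [e2, abs_le]
      constructor <;> linarith
    -- diameter of the dyadic box is small
    have hpdbox : pdiam (pdyBox d j k m) ≤ (Cd + 1) * r := by
      apply pdiam_le _ (by positivity)
      rintro a ha b hb
      simp only [pdyBox, Set.mem_setOf_eq, hrj, hrr] at ha hb
      have hcoord : ∀ i, |(a.1 - b.1) i| ≤ r := by
        intro i
        have h1 := (ha.1 i).1; have h2 := (ha.1 i).2
        have h3 := (hb.1 i).1; have h4 := (hb.1 i).2
        have e : ((k i : ℝ) + 1) * r = (k i : ℝ) * r + r := by ring
        rw [e] at h2 h4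
        have e2 : (a.1 - b.1) i = a.1 i - b.1 i := rfl
        rw [e2, abs_le]
        constructor <;> linarith
      have hdist : dist a.1 b.1 ≤ Cd * r := by
        rw [dist_eq_norm]
        exact norm_le_of_coords hrpos.le _ hcoord
      have htd : Real.sqrt |a.2 - b.2| ≤ r := by
        have h5 : |a.2 - b.2| ≤ r ^ 2 := by
          have h1 := ha.2.1; have h2 := ha.2.2
          have h3 := hb.2.1; have h4 := hb.2.2
          have e : ((m : ℝ) + 1) * r ^ 2 = (m : ℝ) * r ^ 2 + r ^ 2 := by ring
          rw [e] at h2 h4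
          rw [abs_le]; constructor <;> linarith
        calc Real.sqrt |a.2 - b.2| ≤ Real.sqrt (r ^ 2) := Real.sqrt_le_sqrt h5
          _ = r := Real.sqrt_sq hrpos.le
      calc pdist a b = dist a.1 b.1 + Real.sqrt |a.2 - b.2| := rfl
        _ ≤ Cd * r + r := add_le_add hdist htd
        _ = (Cd + 1) * r := by ring
    have hDδ₁ : D < δ₁ / (4 * (Cd + 1)) := lt_of_lt_of_le hq (min_le_left _ _)
    have hpdboxlt : pdiam (pdyBox d j k m) < δ₁ := by
      have h4c : (0:ℝ) < 4 * (Cd + 1) := by positivity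
      rw [lt_div_iff₀ h4c] at hDδ₁
      calc pdiam (pdyBox d j k m) ≤ (Cd + 1) * r := hpdbox
        _ ≤ (Cd + 1) * (4 * D) := by nlinarith
        _ < δ₁ := by nlinarith
    have hβ := hbox j k m hpbox hpdboxlt
    set Q2 := pdyDil d 2 j k m with hQ2Def
    -- pairwise bound on Q2
    have hQ2b : ∀ a ∈ Q2, ∀ b ∈ Q2, pdist a b ≤ C * r := by
      rintro a ha b hb
      simp only [hQ2Def, pdyDil, Set.mem_setOf_eq, hrj, hrr] at ha hb
      have hcoord : ∀ i, |(a.1 - b.1) i| ≤ 2 * r := by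
        intro i
        have h1 := ha.1 i; have h2 := hb.1 i
        rw [abs_le] at h1 h2 ⊢
        have : (a.1 - b.1) i = a.1 i - b.1 i := rfl
        rw [this]
        constructor <;> [linarith [h1.1, h2.2]; linarith [h1.2, h2.1]]
      have hdist : dist a.1 b.1 ≤ Cd * (2 * r) := by
        rw [dist_eq_norm]
        exact norm_le_of_coords (by positivity) _ hcoord
      have htd : Real.sqrt |a.2 - b.2| ≤ 2 * r := by
        have h1 := ha.2; have h2 := hb.2
        rw [abs_le] at h1 h2
        have h5 : |a.2 - b.2| ≤ (2 * r) ^ 2 := by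
          have e : (2 * r) ^ 2 = 4 * r ^ 2 := by ring
          have e2 : 2 * r ^ 2 / 2 = r ^ 2 := by ring
          rw [e2] at h1 h2
          rw [e, abs_le]; constructor <;> linarith [h1.1, h1.2, h2.1, h2.2]
        calc Real.sqrt |a.2 - b.2| ≤ Real.sqrt ((2 * r) ^ 2) := Real.sqrt_le_sqrt h5
          _ = 2 * r := Real.sqrt_sq (by positivity)
      calc pdist a b = dist a.1 b.1 + Real.sqrt |a.2 - b.2| := rfl
        _ ≤ Cd * (2 * r) + 2 * r := add_le_add hdist htd
        _ = C * r := by rw [hCDef]; ring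
    -- memberships
    have hpQ2 : p ∈ Q2 := by
      simp only [hQ2Def, pdyDil, Set.mem_setOf_eq, hrj, hrr]
      refine ⟨fun i => ?_, ?_⟩
      · have := hcx i; linarith [(hcx i)]
      · linarith [hct]
    have hqx : ∀ i, |q.1 i - p.1 i| ≤ D := by
      intro i
      have h1 : |q.1 i - p.1 i| = |(q.1 - p.1) i| := rfl
      rw [h1]
      calc |(q.1 - p.1) i| ≤ ‖q.1 - p.1‖ := abs_coord_le _ i
        _ = dist q.1 p.1 := (dist_eq_norm _ _).symm
        _ = dist p.1 q.1 := dist_comm _ _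
        _ ≤ D := hq1
    have hqt : |q.2 - p.2| ≤ D ^ 2 := by
      have h1 : |q.2 - p.2| = |p.2 - q.2| := abs_sub_comm _ _
      rw [h1, ← Real.sq_sqrt (abs_nonneg (p.2 - q.2))]
      exact pow_le_pow_left₀ (Real.sqrt_nonneg _) hq2 2
    have hqspatial : ∀ y2 : ℝ, |y2 - ((m : ℝ) + 1/2) * r ^ 2| ≤ 2 * r ^ 2 / 2 →
        (q.1, y2) ∈ Q2 := by
      intro y2 hy2
      simp only [hQ2Def, pdyDil, Set.mem_setOf_eq, hrj, hrr]
      refine ⟨fun i => ?_, hy2⟩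
      have h1 := hcx i
      have h2 := hqx i
      have h3 : |q.1 i - ((k i : ℝ) + 1/2) * r| ≤ |q.1 i - p.1 i| + |p.1 i - ((k i : ℝ) + 1/2) * r| := by
        have := abs_sub_le (q.1 i) (p.1 i) (((k i : ℝ) + 1/2) * r)
        exact this
      linarith
    have hqtQ2 : (q.1, p.2) ∈ Q2 := by
      apply hqspatial
      linarith [hct]
    have hqQ2 : q ∈ Q2 := by
      have : q = (q.1, q.2) := rfl
      rw [this]
      apply hqspatial
      have h1 : |q.2 - ((m : ℝ) + 1/2) * r ^ 2| ≤ |q.2 - p.2| + |p.2 - ((m : ℝ) + 1/2) * r ^ 2| :=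
        abs_sub_le _ _ _
      have hDr : D ≤ r / 2 := by linarith
      have h2 : D ^ 2 ≤ r ^ 2 / 4 := by
        have := pow_le_pow_left₀ hD0 hDr 2
        calc D ^ 2 ≤ (r / 2) ^ 2 := this
          _ = r ^ 2 / 4 := by ring
      linarith [hct, hqt]
    -- positivity of pdiam Q2
    have hpdQ2pos : 0 < pdiam Q2 := by
      have ha : (p.1, (m : ℝ) * r ^ 2) ∈ Q2 := by
        simp only [hQ2Def, pdyDil, Set.mem_setOf_eq, hrj, hrr]
        refine ⟨fun i => ?_, ?_⟩
        · linarith [hcx i]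
        · have e2 : (m : ℝ) * r ^ 2 - ((m : ℝ) + 1 / 2) * r ^ 2 = -(r ^ 2 / 2) := by ring
          rw [e2, abs_neg, abs_of_nonneg (by positivity : (0:ℝ) ≤ r ^ 2 / 2)]
          linarith
      have hb : (p.1, ((m : ℝ) + 1) * r ^ 2) ∈ Q2 := by
        simp only [hQ2Def, pdyDil, Set.mem_setOf_eq, hrj, hrr]
        refine ⟨fun i => ?_, ?_⟩
        · linarith [hcx i]
        · have e2 : ((m : ℝ) + 1) * r ^ 2 - ((m : ℝ) + 1 / 2) * r ^ 2 = r ^ 2 / 2 := by ring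
          rw [e2, abs_of_nonneg (by positivity : (0:ℝ) ≤ r ^ 2 / 2)]
          linarith
      have hdab : pdist (p.1, (m : ℝ) * r ^ 2) (p.1, ((m : ℝ) + 1) * r ^ 2) = r := by
        show dist p.1 p.1 + Real.sqrt |(m : ℝ) * r ^ 2 - ((m : ℝ) + 1) * r ^ 2| = r
        rw [dist_self]
        have : (m : ℝ) * r ^ 2 - ((m : ℝ) + 1) * r ^ 2 = -(r ^ 2) := by ring
        rw [this, abs_neg, abs_of_nonneg (by positivity), Real.sqrt_sq hrpos.le]
        ring
      have := le_pdiam hQ2b ha hb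
      rw [hdab] at this
      linarith
    obtain ⟨A2, hA2⟩ := beta_extract L ψ hψ Q2 (C * r) hQ2b p hpQ2 hpdQ2pos hβ
    have hpdQ2le : pdiam Q2 ≤ C * r := pdiam_le hQ2b (by positivity)
    have key : ∀ q' ∈ Q2, |ψ q' - A2 q'.1| ≤ ε / (16 * C) * (C * r) := by
      intro q' hq'
      exact (hA2 q' hq').trans (mul_le_mul_of_nonneg_left hpdQ2le hε'.le)
    have htime : |ψ q - ψ (q.1, p.2)| ≤ 2 * (ε / (16 * C) * (C * r)) := by
      have k1 := key q hqQ2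
      have k2 := key (q.1, p.2) hqtQ2
      have h1 : |ψ q - ψ (q.1, p.2)| ≤ |ψ q - A2 q.1| + |A2 q.1 - ψ (q.1, p.2)| :=
        abs_sub_le _ _ _
      have h2 : |A2 q.1 - ψ (q.1, p.2)| = |ψ (q.1, p.2) - A2 q.1| := abs_sub_comm _ _
      rw [h2] at h1
      have k2' : |ψ (q.1, p.2) - A2 q.1| ≤ ε / (16 * C) * (C * r) := k2
      linarith
    have hspace : |ψ (q.1, p.2) - ψ p - A (q.1 - p.1)| ≤ ε / 2 * ‖q.1 - p.1‖ := by
      apply hder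
      calc ‖q.1 - p.1‖ = dist q.1 p.1 := (dist_eq_norm _ _).symm
        _ = dist p.1 q.1 := dist_comm _ _
        _ ≤ D := hq1
        _ < min (δ₁ / (4 * (Cd + 1))) δ₂ := hq
        _ ≤ δ₂ := min_le_right _ _
    have hnq : ‖q.1 - p.1‖ ≤ D := by
      calc ‖q.1 - p.1‖ = dist q.1 p.1 := (dist_eq_norm _ _).symm
        _ = dist p.1 q.1 := dist_comm _ _
        _ ≤ D := hq1
    have e1 : ψ q - ψ p - A (q.1 - p.1) =
        (ψ q - ψ (q.1, p.2)) + (ψ (q.1, p.2) - ψ p - A (q.1 - p.1)) := by ring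
    have hcc : ε / (16 * C) * (C * r) = ε * r / 16 := by
      field_simp
    calc |ψ q - ψ p - A (q.1 - p.1)|
        ≤ |ψ q - ψ (q.1, p.2)| + |ψ (q.1, p.2) - ψ p - A (q.1 - p.1)| := by
          rw [e1]; exact abs_add_le _ _
      _ ≤ 2 * (ε / (16 * C) * (C * r)) + ε / 2 * ‖q.1 - p.1‖ := add_le_add htime hspace
      _ ≤ ε * D := by
          rw [hcc]
          have m1 : ε * r ≤ ε * (4 * D) := mul_le_mul_of_nonneg_left hr4D hε.le
          have m2 : ε / 2 * ‖q.1 - p.1‖ ≤ ε / 2 * D :=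
            mul_le_mul_of_nonneg_left hnq (by positivity)
          linarith
  · -- degenerate case : D = 0, i.e. q = p
    have h1 : dist p.1 q.1 = 0 := le_antisymm (by rw [← hD0'] at hq1; exact hq1) dist_nonneg
    have h2 : Real.sqrt |p.2 - q.2| = 0 :=
      le_antisymm (by rw [← hD0'] at hq2; exact hq2) (Real.sqrt_nonneg _)
    have h3 : q.1 = p.1 := (dist_eq_zero.mp h1).symm
    have h4 : q.2 = p.2 := by
      have : |p.2 - q.2| = 0 := by
        have := Real.sq_sqrt (abs_nonneg (p.2 - q.2))
        rw [h2] at this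
        simpa using this.symm
      have := abs_eq_zero.mp this
      linarith
    have hqp : q = p := Prod.ext h3 h4
    rw [hqp]
    have : |ψ p - ψ p - A (p.1 - p.1)| = 0 := by simp
    rw [this]
    exact mul_nonneg hε.le hD0
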